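/- Let H = H₁ ⊕ H₂ and let K be a bounded J-self-adjoint operator on H with 0 ≤ K̂ ≤ 1, where K̂ := KP₁ + (1−K)P₂. If Q₁ is an orthogonal projection with range contained in H₁ such that Q₁K̂Q₁ is trace class, and Q₂ is an orthogonal projection with range in H₂ such that Q₂(1−K̂)Q₂ is trace class, then K(Q₁+Q₂) is a Hilbert–Schmidt operator. -/

import Mathlib

open scoped InnerProductSpace ComplexConjugate

noncomputable section

/-- The absolute value `|A| = √(A*A)` of a bounded operator on a complex Hilbert space. -/
noncomputable def absCLM {H : Type} [NormedAddCommGroup H] [InnerProductSpace ℂ H]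
    [CompleteSpace H] (A : H →L[ℂ] H) : H →L[ℂ] H :=
  CFC.sqrt (ContinuousLinearMap.adjoint A * A)

/-- The trace of an operator computed along a Hilbert basis. -/
noncomputable def traceAlong {H : Type} [NormedAddCommGroup H] [InnerProductSpace ℂ H]
    [CompleteSpace H] {ι : Type} (b : HilbertBasis ι ℂ H) (A : H →L[ℂ] H) : ℂ :=
  ∑' i, ⟪b i, A (b i)⟫_ℂ

/-- `A` is trace class: `Tr |A| < ∞` along the Hilbert basis `b`. -/
def IsTraceClassAlong {H : Type} [NormedAddCommGroup H] [InnerProductSpace ℂ H]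
    [CompleteSpace H] {ι : Type} (b : HilbertBasis ι ℂ H) (A : H →L[ℂ] H) : Prop :=
  Summable fun i => (⟪b i, absCLM A (b i)⟫_ℂ).re

/-- The trace norm `‖A‖₁ = Tr |A|` along the Hilbert basis `b`. -/
noncomputable def traceNormAlong {H : Type} [NormedAddCommGroup H] [InnerProductSpace ℂ H]
    [CompleteSpace H] {ι : Type} (b : HilbertBasis ι ℂ H) (A : H →L[ℂ] H) : ℝ :=
  ∑' i, (⟪b i, absCLM A (b i)⟫_ℂ).re

/-- `A` is a Hilbert–Schmidt operator (along the Hilbert basis `b`). -/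
def IsHSAlong {H : Type} [NormedAddCommGroup H] [InnerProductSpace ℂ H]
    [CompleteSpace H] {ι : Type} (b : HilbertBasis ι ℂ H) (A : H →L[ℂ] H) : Prop :=
  Summable fun i => ‖A (b i)‖ ^ 2

/-- The Hilbert–Schmidt norm `‖A‖₂` along the Hilbert basis `b`. -/
noncomputable def hsNormAlong {H : Type} [NormedAddCommGroup H] [InnerProductSpace ℂ H]
    [CompleteSpace H] {ι : Type} (b : HilbertBasis ι ℂ H) (A : H →L[ℂ] H) : ℝ :=
  Real.sqrt (∑' i, ‖A (b i)‖ ^ 2)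

/-- `Cₙ(A) = (1/n!) Σ_{ξ∈Sₙ} sign ξ · Π_{η ∈ Cycle(ξ)} tr(A^{|η|})`, where `trA` is used
for the trace of `A` itself (cycles of length one) and traces of higher powers are
computed along the Hilbert basis `b`. -/
noncomputable def cycleSum {H : Type} [NormedAddCommGroup H] [InnerProductSpace ℂ H]
    [CompleteSpace H] {ι : Type} (b : HilbertBasis ι ℂ H) (trA : ℂ) (A : H →L[ℂ] H)
    (n : ℕ) : ℂ :=
  ((Nat.factorial n : ℂ))⁻¹ * ∑ ξ : Equiv.Perm (Fin n),
    ((Equiv.Perm.sign ξ : ℤ) : ℂ) * trA ^ (n - ξ.support.card) *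
      ∏ η ∈ ξ.cycleFactorsFinset, traceAlong b (A ^ η.support.card)

/-- The extended Fredholm determinant `Det(1+A)` for `A ∈ L_{1|2}(H)`, with respect to the
splitting given by the projections `P₁, P₂`: `Det(1+A) = 1 + Σ_{n≥1} Cₙ(A)`, where in `Cₙ(A)`
the trace of `A` is taken to be `Tr(A_even)`. -/
noncomputable def fredholmDetExt {H : Type} [NormedAddCommGroup H] [InnerProductSpace ℂ H]
    [CompleteSpace H] {ι : Type} (b : HilbertBasis ι ℂ H) (P₁ P₂ : H →L[ℂ] H)
    (A : H →L[ℂ] H) : ℂ :=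
  1 + ∑' n : ℕ, cycleSum b (traceAlong b (P₁ * A * P₁ + P₂ * A * P₂)) A (n + 1)

/-- The classical Fredholm determinant `Det(1+A)` of a trace class operator `A`. -/
noncomputable def fredholmDetCl {H : Type} [NormedAddCommGroup H] [InnerProductSpace ℂ H]
    [CompleteSpace H] {ι : Type} (b : HilbertBasis ι ℂ H) (A : H →L[ℂ] H) : ℂ :=
  1 + ∑' n : ℕ, cycleSum b (traceAlong b A) A (n + 1)

end
set_option synthInstance.maxHeartbeats 1000000

section Aux

variable {H : Type} [NormedAddCommGroup H] [InnerProductSpace ℂ H] [CompleteSpace H]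

/-- For `0 ≤ A ≤ 1`, we have `A * A ≤ A`. -/
lemma aux_sq_le_self {A : H →L[ℂ] H} (h0 : 0 ≤ A) (h1 : A ≤ 1) : A * A ≤ A := by
  have hss : CFC.sqrt A * CFC.sqrt A = A := CFC.sqrt_mul_sqrt_self A h0
  set s : H →L[ℂ] H := CFC.sqrt A with hs
  have hssa : star s = s := (IsSelfAdjoint.of_nonneg (CFC.sqrt_nonneg (a := A))).star_eq
  have h1' : (0 : H →L[ℂ] H) ≤ 1 - A := sub_nonneg.2 h1
  have hpos := star_left_conjugate_nonneg h1' s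
  have heq : star s * (1 - A) * s = A - A * A := by
    rw [hssa, ← hss]; noncomm_ring
  rw [heq] at hpos
  exact sub_nonneg.1 hpos

/-- Key pointwise bound: for `0 ≤ T ≤ 1` and self-adjoint `Q`,
`‖T (Q x)‖² ≤ re ⟪x, (Q T Q) x⟫`. -/
lemma aux_key {T Q : H →L[ℂ] H} (hT0 : 0 ≤ T) (hT1 : T ≤ 1)
    (hQsa : IsSelfAdjoint Q) (x : H) :
    ‖T (Q x)‖ ^ 2 ≤ (⟪x, (Q * T * Q) x⟫_ℂ).re := by
  have hTsa : ContinuousLinearMap.adjoint T = T := by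
    rw [← ContinuousLinearMap.star_eq_adjoint]
    exact ((ContinuousLinearMap.nonneg_iff_isPositive T).1 hT0).isSelfAdjoint.star_eq
  have hQ' : ContinuousLinearMap.adjoint Q = Q := by
    rw [← ContinuousLinearMap.star_eq_adjoint]; exact hQsa.star_eq
  have h2 : Q * (T * T) * Q ≤ Q * T * Q := by
    have := star_left_conjugate_le_conjugate (aux_sq_le_self hT0 hT1) Q
    rwa [hQsa.star_eq] at this
  have hnorm : ‖T (Q x)‖ ^ 2 = (⟪x, (Q * (T * T) * Q) x⟫_ℂ).re := by
    have e1 : (⟪T (Q x), T (Q x)⟫_ℂ) = ⟪x, (Q * (T * T) * Q) x⟫_ℂ := by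
      simp only [ContinuousLinearMap.mul_apply]
      rw [← hTsa, ContinuousLinearMap.adjoint_inner_left, hTsa]
      rw [← hQ', ContinuousLinearMap.adjoint_inner_left, hQ']
    rw [← e1, ← RCLike.re_to_complex]
    exact (inner_self_eq_norm_sq (𝕜 := ℂ) (T (Q x))).symm
  rw [hnorm]
  have hD : (Q * T * Q - Q * (T * T) * Q).IsPositive :=
    (ContinuousLinearMap.le_def _ _).1 h2
  have := hD.inner_nonneg_right x
  simp only [ContinuousLinearMap.sub_apply, inner_sub_right, map_sub,
    RCLike.re_to_complex] at this
  have h3 := (Complex.nonneg_iff.1 this).1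
  rw [Complex.sub_re] at h3
  linarith

end Aux

/-- Let `H = H₁ ⊕ H₂` and let `K` be a bounded `J`-self-adjoint operator
with `0 ≤ K̂ ≤ 1`, where `K̂ := KP₁ + (1−K)P₂`.  If `Q₁` is an orthogonal projection with
range contained in `H₁` such that `Q₁K̂Q₁` is trace class, and `Q₂` is an orthogonal
projection with range contained in `H₂` such that `Q₂(1−K̂)Q₂` is trace class, then
`K(Q₁+Q₂)` is a Hilbert–Schmidt operator. -/
theorem stmt_13 {H : Type}
    [NormedAddCommGroup H] [InnerProductSpace ℂ H] [CompleteSpace H]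
    (b : HilbertBasis ℕ ℂ H) (P₁ P₂ : H →L[ℂ] H)
    (hP₁ : IsIdempotentElem P₁) (hP₁sa : IsSelfAdjoint P₁)
    (hP₂ : IsIdempotentElem P₂) (hP₂sa : IsSelfAdjoint P₂)
    (hsum : P₁ + P₂ = 1)
    (K : H →L[ℂ] H)
    (hJ : ContinuousLinearMap.adjoint K * (P₁ - P₂) = (P₁ - P₂) * K)
    (hpos : (K * P₁ + (1 - K) * P₂).IsPositive)
    (hle : (1 - (K * P₁ + (1 - K) * P₂)).IsPositive)
    (Q₁ : H →L[ℂ] H) (hQ₁ : IsIdempotentElem Q₁) (hQ₁sa : IsSelfAdjoint Q₁)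
    (hQ₁ran : P₁ * Q₁ = Q₁)
    (hQ₁tc : IsTraceClassAlong b (Q₁ * (K * P₁ + (1 - K) * P₂) * Q₁))
    (Q₂ : H →L[ℂ] H) (hQ₂ : IsIdempotentElem Q₂) (hQ₂sa : IsSelfAdjoint Q₂)
    (hQ₂ran : P₂ * Q₂ = Q₂)
    (hQ₂tc : IsTraceClassAlong b (Q₂ * (1 - (K * P₁ + (1 - K) * P₂)) * Q₂)) :
    IsHSAlong b (K * (Q₁ + Q₂)) := by
  set T : H →L[ℂ] H := K * P₁ + (1 - K) * P₂ with hTdef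
  have hT0 : (0 : H →L[ℂ] H) ≤ T := (ContinuousLinearMap.nonneg_iff_isPositive T).2 hpos
  have h1T0 : (0 : H →L[ℂ] H) ≤ 1 - T := (ContinuousLinearMap.nonneg_iff_isPositive _).2 hle
  have hT1 : T ≤ 1 := sub_nonneg.1 h1T0
  have h1T1 : (1 : H →L[ℂ] H) - T ≤ 1 := by
    rw [ContinuousLinearMap.le_def, sub_sub_cancel]
    exact hpos
  have hP₂Q₁ : P₂ * Q₁ = 0 := by
    have h2 : P₂ = 1 - P₁ := by rw [← hsum]; abel
    rw [h2, sub_mul, one_mul, hQ₁ran, sub_self]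
  have hP₁Q₂ : P₁ * Q₂ = 0 := by
    have h2 : P₁ = 1 - P₂ := by rw [← hsum]; abel
    rw [h2, sub_mul, one_mul, hQ₂ran, sub_self]
  have hTQ₁ : T * Q₁ = K * Q₁ := by
    rw [hTdef, add_mul, mul_assoc, mul_assoc, hQ₁ran, hP₂Q₁, mul_zero, add_zero]
  have hTQ₂ : (1 - T) * Q₂ = K * Q₂ := by
    rw [hTdef]
    rw [sub_mul, one_mul, add_mul, mul_assoc, mul_assoc, hQ₂ran, hP₁Q₂, mul_zero, zero_add,
      sub_mul, one_mul]
    abel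
  have hKQ : K * (Q₁ + Q₂) = T * Q₁ + (1 - T) * Q₂ := by
    rw [hTQ₁, hTQ₂, mul_add]
  -- positivity and absolute values of the two trace-class operators
  have hA₁0 : (0 : H →L[ℂ] H) ≤ Q₁ * T * Q₁ := by
    have := star_left_conjugate_nonneg hT0 Q₁
    rwa [hQ₁sa.star_eq] at this
  have hA₂0 : (0 : H →L[ℂ] H) ≤ Q₂ * (1 - T) * Q₂ := by
    have := star_left_conjugate_nonneg h1T0 Q₂
    rwa [hQ₂sa.star_eq] at this
  have habs₁ : absCLM (Q₁ * T * Q₁) = Q₁ * T * Q₁ := by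
    rw [absCLM, ← ContinuousLinearMap.star_eq_adjoint, (IsSelfAdjoint.of_nonneg hA₁0).star_eq,
      CFC.sqrt_mul_self _ hA₁0]
  have habs₂ : absCLM (Q₂ * (1 - T) * Q₂) = Q₂ * (1 - T) * Q₂ := by
    rw [absCLM, ← ContinuousLinearMap.star_eq_adjoint, (IsSelfAdjoint.of_nonneg hA₂0).star_eq,
      CFC.sqrt_mul_self _ hA₂0]
  unfold IsTraceClassAlong at hQ₁tc hQ₂tc
  rw [habs₁] at hQ₁tc
  rw [habs₂] at hQ₂tc
  -- summability
  unfold IsHSAlong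
  rw [hKQ]
  have hsummable : Summable fun i =>
      2 * (⟪b i, (Q₁ * T * Q₁) (b i)⟫_ℂ).re + 2 * (⟪b i, (Q₂ * (1 - T) * Q₂) (b i)⟫_ℂ).re :=
    (hQ₁tc.mul_left 2).add (hQ₂tc.mul_left 2)
  refine Summable.of_nonneg_of_le (fun i => by positivity) (fun i => ?_) hsummable
  have hx₁ := aux_key hT0 hT1 hQ₁sa (b i)
  have hx₂ := aux_key h1T0 h1T1 hQ₂sa (b i)
  have happ : ((T * Q₁ + (1 - T) * Q₂) (b i)) = T (Q₁ (b i)) + (1 - T) (Q₂ (b i)) := by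
    simp [ContinuousLinearMap.mul_apply]
  rw [happ]
  have htri : ‖T (Q₁ (b i)) + (1 - T) (Q₂ (b i))‖ ^ 2
      ≤ 2 * ‖T (Q₁ (b i))‖ ^ 2 + 2 * ‖(1 - T) (Q₂ (b i))‖ ^ 2 := by
    have h := norm_add_le (T (Q₁ (b i))) ((1 - T) (Q₂ (b i)))
    nlinarith [norm_nonneg (T (Q₁ (b i))), norm_nonneg ((1 - T) (Q₂ (b i))),
      sq_nonneg (‖T (Q₁ (b i))‖ - ‖(1 - T) (Q₂ (b i))‖),
      norm_nonneg (T (Q₁ (b i)) + (1 - T) (Q₂ (b i)))]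
  linarith
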